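/- For any finite subset ξ of the set of order-preserving injections [j] ↪ [n] with j > 0, the even and odd faces of the lifted set ξ∨ satisfy: if j is even, (ξ∨)⁺ = (ξ⁺)∨ and (ξ∨)⁻ = (ξ⁻)∨ ∪ ξ; if j is odd, (ξ∨)⁺ = (ξ⁺)∨ ∪ ξ and (ξ∨)⁻ = (ξ⁻)∨. -/

import Mathlib

/-- `Simplex n j` is the set `[n]_j` of order-preserving injections `[j] ↪ [n]`. -/
abbrev Simplex (n j : ℕ) := Fin (j+1) ↪o Fin (n+1)

/-- The `k`-th face `a ∘ δ_k` of `a ∈ [n]_{j+1}`. -/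
def face {n j : ℕ} (a : Simplex n (j+1)) (k : Fin (j+2)) : Simplex n j :=
  (Fin.succAboveOrderEmb k).trans a

/-- The even faces `a⁺` of `a`. -/
def posFaces {n j : ℕ} (a : Simplex n (j+1)) : Set (Simplex n j) :=
  {b | ∃ k : Fin (j+2), Even (k : ℕ) ∧ b = face a k}

/-- The odd faces `a⁻` of `a`. -/
def negFaces {n j : ℕ} (a : Simplex n (j+1)) : Set (Simplex n j) :=
  {b | ∃ k : Fin (j+2), Odd (k : ℕ) ∧ b = face a k}

def setPos {n j : ℕ} (ξ : Set (Simplex n (j+1))) : Set (Simplex n j) := ⋃ a ∈ ξ, posFaces a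
def setNeg {n j : ℕ} (ξ : Set (Simplex n (j+1))) : Set (Simplex n j) := ⋃ a ∈ ξ, negFaces a

/-- The inclusion `[n]_j ⊆ [n+1]_j`. -/
def liftS {n j : ℕ} (a : Simplex n j) : Simplex (n+1) j :=
  a.trans (OrderEmbedding.ofStrictMono Fin.castSucc Fin.strictMono_castSucc)

/-- `a∨ ∈ [n+1]_{j+1}`: append the new top element `n+1` to `a ∈ [n]_j`. -/
def vee {n j : ℕ} (a : Simplex n j) : Simplex (n+1) (j+1) :=
  OrderEmbedding.ofStrictMono (Fin.snoc (fun i => (a i).castSucc) (Fin.last (n+1))) (by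
    intro i k h
    rcases Fin.eq_castSucc_or_eq_last k with ⟨k', rfl⟩ | rfl
    · rcases Fin.eq_castSucc_or_eq_last i with ⟨i', rfl⟩ | rfl
      · simpa only [Fin.snoc_castSucc] using
          Fin.castSucc_lt_castSucc_iff.mpr (a.strictMono (Fin.castSucc_lt_castSucc_iff.mp h))
      · exact absurd (lt_trans h (Fin.castSucc_lt_last k')) (lt_irrefl _)
    · rcases Fin.eq_castSucc_or_eq_last i with ⟨i', rfl⟩ | rfl
      · simp only [Fin.snoc_castSucc, Fin.snoc_last]
        exact Fin.castSucc_lt_last _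
      · exact absurd h (lt_irrefl _))

/-- A subset of `[n]_{j+1}` is well-formed if distinct elements share no even face
and no odd face. -/
def WellFormed {n j : ℕ} (ξ : Set (Simplex n (j+1))) : Prop :=
  ∀ a ∈ ξ, ∀ b ∈ ξ, a ≠ b →
    posFaces a ∩ posFaces b = ∅ ∧ negFaces a ∩ negFaces b = ∅

/-- `ξ` moves `μ` to `π`. -/
def Moves {n j : ℕ} (ξ : Set (Simplex n (j+1))) (μ π : Set (Simplex n j)) : Prop :=
  π = (μ ∪ setPos ξ) \ setNeg ξ ∧ μ = (π ∪ setNeg ξ) \ setPos ξ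

lemma vee_apply {n j : ℕ} (a : Simplex n j) (i) : (vee a) i = Fin.snoc (α := fun _ => Fin (n+2)) (fun i => (a i).castSucc) (Fin.last (n+1)) i := rfl

lemma face_vee_castSucc {n j : ℕ} (a : Simplex n (j+1)) (k : Fin (j+2)) :
    face (vee a) k.castSucc = vee (face a k) := by
  ext i
  rcases Fin.eq_castSucc_or_eq_last i with ⟨i', rfl⟩ | rfl
  · simp [face, vee_apply, Fin.succAboveOrderEmb, Fin.castSucc_succAbove_castSucc]
  · have h1 : k.castSucc.succAbove (Fin.last (j+1)) = Fin.last (j+2) := by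
      rw [Fin.succAbove_castSucc_of_le k (Fin.last (j+1)) (Fin.le_last k), Fin.succ_last]
    simp [face, vee_apply, Fin.succAboveOrderEmb, h1]

lemma face_vee_last {n j : ℕ} (a : Simplex n (j+1)) :
    face (vee a) (Fin.last (j+2)) = liftS a := by
  ext i
  simp [face, vee_apply, liftS, Fin.succAboveOrderEmb, Fin.succAbove_last]

lemma faces_vee_aux {n j : ℕ} (a : Simplex n (j+1)) (b : Simplex (n+1) (j+1)) (P : ℕ → Prop) :
    (∃ k : Fin (j+3), P (k : ℕ) ∧ b = face (vee a) k) ↔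
      (∃ k : Fin (j+2), P (k : ℕ) ∧ b = vee (face a k)) ∨ (P (j+2) ∧ b = liftS a) := by
  constructor
  · rintro ⟨k, hP, rfl⟩
    rcases Fin.eq_castSucc_or_eq_last k with ⟨k', rfl⟩ | rfl
    · exact Or.inl ⟨k', hP, face_vee_castSucc a k'⟩
    · exact Or.inr ⟨hP, (face_vee_last a)⟩
  · rintro (⟨k, hP, rfl⟩ | ⟨hP, rfl⟩)
    · exact ⟨k.castSucc, hP, (face_vee_castSucc a k).symm⟩
    · exact ⟨Fin.last (j+2), hP, (face_vee_last a).symm⟩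


lemma exists_swap_img {n j : ℕ} (a : Simplex n (j+1)) (b : Simplex (n+1) (j+1)) (P : ℕ → Prop) :
    (∃ k : Fin (j+2), P (k : ℕ) ∧ b = vee (face a k)) ↔
      ∃ x, (∃ k : Fin (j+2), P (k : ℕ) ∧ x = face a k) ∧ vee x = b := by
  constructor
  · rintro ⟨k, hk, rfl⟩; exact ⟨face a k, ⟨k, hk, rfl⟩, rfl⟩
  · rintro ⟨x, ⟨k, hk, rfl⟩, rfl⟩; exact ⟨k, hk, rfl⟩

lemma posFaces_vee_even {n j : ℕ} (h : ¬ Even (j+2)) (a : Simplex n (j+1)) :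
    posFaces (vee a) = vee '' posFaces a := by
  ext b
  simp only [posFaces, Set.mem_setOf_eq, Set.mem_image,
    faces_vee_aux a b Even, exists_swap_img a b Even, h, false_and, or_false]

lemma negFaces_vee_even {n j : ℕ} (h : Odd (j+2)) (a : Simplex n (j+1)) :
    negFaces (vee a) = vee '' negFaces a ∪ {liftS a} := by
  ext b
  simp only [negFaces, Set.mem_setOf_eq, Set.mem_image, Set.mem_union, Set.mem_singleton_iff,
    faces_vee_aux a b Odd, exists_swap_img a b Odd, h, true_and]

lemma posFaces_vee_odd {n j : ℕ} (h : Even (j+2)) (a : Simplex n (j+1)) :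
    posFaces (vee a) = vee '' posFaces a ∪ {liftS a} := by
  ext b
  simp only [posFaces, Set.mem_setOf_eq, Set.mem_image, Set.mem_union, Set.mem_singleton_iff,
    faces_vee_aux a b Even, exists_swap_img a b Even, h, true_and]

lemma negFaces_vee_odd {n j : ℕ} (h : ¬ Odd (j+2)) (a : Simplex n (j+1)) :
    negFaces (vee a) = vee '' negFaces a := by
  ext b
  simp only [negFaces, Set.mem_setOf_eq, Set.mem_image,
    faces_vee_aux a b Odd, exists_swap_img a b Odd, h, false_and, or_false]

/-- Equation (10) of Buckley–Garner: faces of the lifted set `ξ∨`. -/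
theorem vee_faces (n j : ℕ) (ξ : Set (Simplex n (j+1))) (hfin : ξ.Finite) :
    (Even (j+1) →
      setPos (vee '' ξ) = vee '' (setPos ξ) ∧
      setNeg (vee '' ξ) = vee '' (setNeg ξ) ∪ liftS '' ξ) ∧
    (Odd (j+1) →
      setPos (vee '' ξ) = vee '' (setPos ξ) ∪ liftS '' ξ ∧
      setNeg (vee '' ξ) = vee '' (setNeg ξ)) := by
  have himg : ∀ (f : Set (Simplex n (j+1)) → Prop), True := fun _ => trivial
  constructor
  · intro hj
    obtain ⟨m, hm⟩ := hj
    have h2 : ¬ Even (j+2) := by rintro ⟨l, hl⟩; omega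
    have h2' : Odd (j+2) := ⟨m, by omega⟩
    constructor
    · rw [setPos, Set.biUnion_image, setPos, Set.image_iUnion₂]
      exact Set.iUnion₂_congr fun a _ => posFaces_vee_even h2 a
    · rw [setNeg, Set.biUnion_image, setNeg, Set.image_iUnion₂]
      calc ⋃ a ∈ ξ, negFaces (vee a)
          = ⋃ a ∈ ξ, (vee '' negFaces a ∪ {liftS a}) :=
            Set.iUnion₂_congr fun a _ => negFaces_vee_even h2' a
        _ = (⋃ a ∈ ξ, vee '' negFaces a) ∪ ⋃ a ∈ ξ, {liftS a} := by
            simp only [Set.iUnion_union_distrib]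
        _ = (⋃ a ∈ ξ, vee '' negFaces a) ∪ liftS '' ξ := by
            rw [← Set.image_eq_iUnion]
  · intro hj
    obtain ⟨m, hm⟩ := hj
    have h2 : Even (j+2) := ⟨m+1, by omega⟩
    have h2' : ¬ Odd (j+2) := by rintro ⟨l, hl⟩; omega
    constructor
    · rw [setPos, Set.biUnion_image, setPos, Set.image_iUnion₂]
      calc ⋃ a ∈ ξ, posFaces (vee a)
          = ⋃ a ∈ ξ, (vee '' posFaces a ∪ {liftS a}) :=
            Set.iUnion₂_congr fun a _ => posFaces_vee_odd h2 a
        _ = (⋃ a ∈ ξ, vee '' posFaces a) ∪ ⋃ a ∈ ξ, {liftS a} := by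
            simp only [Set.iUnion_union_distrib]
        _ = (⋃ a ∈ ξ, vee '' posFaces a) ∪ liftS '' ξ := by
            rw [← Set.image_eq_iUnion]
    · rw [setNeg, Set.biUnion_image, setNeg, Set.image_iUnion₂]
      exact Set.iUnion₂_congr fun a _ => negFaces_vee_odd h2' a
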